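/- Let p be a prime, k a finite field of characteristic p, and N : k^× → F_p^× the norm map of the extension k/F_p. For every b ∈ k^×, the F_p-linear map ψ_b : k → k given by ψ_b(x) = b·x^p − x is bijective if N(b) ≠ 1; and if N(b) = 1, then both the kernel of ψ_b and the cokernel k/ψ_b(k) have exactly p elements (each is a one-dimensional F_p-vector space). -/

import Mathlib

/-- The `F_p`-linear (additive) map `ψ_b : k → k`, `ψ_b(x) = b·x^p − x`. -/
def stmt8psi (p : ℕ) [Fact p.Prime] (k : Type*) [CommRing k] [CharP k p] (b : k) : k →+ k :=
  ((AddMonoidHom.mulLeft b).comp (frobenius k p).toAddMonoidHom) - AddMonoidHom.id k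


open Polynomial

attribute [local instance] Classical.decEq

section aux

variable (p : ℕ) [Fact p.Prime] (k : Type*) [Field k] [Finite k] [CharP k p]
  [Algebra (ZMod p) k]

/-- Frobenius as an algebra equivalence over `ZMod p`. -/
noncomputable def stmt8frob : k ≃ₐ[ZMod p] k := by
  refine AlgEquiv.ofBijective
    { toRingHom := frobenius k p
      commutes' := fun r => ?_ } ?_
  · simp only [RingHom.toMonoidHom_eq_coe, OneHom.toFun_eq_coe, MonoidHom.toOneHom_coe,
      MonoidHom.coe_coe, frobenius_def]
    rw [← map_pow, ZMod.pow_card]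
  · exact (Finite.injective_iff_bijective).mp (frobenius k p).injective

lemma stmt8frob_pow_apply (m : ℕ) (x : k) : ((stmt8frob p k) ^ m) x = x ^ p ^ m := by
  induction m with
  | zero => simp
  | succ m ih =>
    rw [pow_succ', AlgEquiv.mul_apply, ih]
    show (x ^ p ^ m) ^ p = _
    rw [← pow_mul, ← pow_succ]

lemma stmt8orderOf : orderOf (stmt8frob p k) = Module.finrank (ZMod p) k := by
  have := Fintype.ofFinite k
  set n := Module.finrank (ZMod p) k with hn
  have hq : Fintype.card k = p ^ n := by
    have := Module.card_eq_pow_finrank (K := ZMod p) (V := k)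
    rwa [ZMod.card] at this
  have hp1 : 1 < p := (Fact.out : p.Prime).one_lt
  have hnpos : 0 < n := Module.finrank_pos
  have hpow : (stmt8frob p k) ^ n = 1 := by
    ext x
    rw [stmt8frob_pow_apply, ← hq, FiniteField.pow_card]
    rfl
  refine le_antisymm (orderOf_le_of_pow_eq_one hnpos hpow) ?_
  by_contra hlt
  push_neg at hlt
  set m := orderOf (stmt8frob p k) with hm
  have hmpos : 0 < m := by
    exact (isOfFinOrder_iff_pow_eq_one.mpr ⟨n, hnpos, hpow⟩).orderOf_pos
  have hroot : ∀ x : k, x ^ p ^ m = x := by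
    intro x
    have := pow_orderOf_eq_one (stmt8frob p k)
    calc x ^ p ^ m = ((stmt8frob p k) ^ m) x := (stmt8frob_pow_apply p k m x).symm
    _ = x := by rw [this]; rfl
  -- every element is a root of X ^ p ^ m - X, which has degree p ^ m < card k
  have hne : (X ^ p ^ m - X : k[X]) ≠ 0 :=
    FiniteField.X_pow_card_pow_sub_X_ne_zero k hmpos.ne' hp1
  have hdeg : (X ^ p ^ m - X : k[X]).natDegree = p ^ m :=
    FiniteField.X_pow_card_pow_sub_X_natDegree_eq k hmpos.ne' hp1
  have hsub : (Finset.univ : Finset k) ⊆ (X ^ p ^ m - X : k[X]).roots.toFinset := by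
    intro x _
    rw [Multiset.mem_toFinset, mem_roots hne]
    simp [hroot x]
  have hcard : Fintype.card k ≤ p ^ m := by
    calc Fintype.card k = (Finset.univ : Finset k).card := (Finset.card_univ (α := k)).symm
    _ ≤ (X ^ p ^ m - X : k[X]).roots.toFinset.card := Finset.card_le_card hsub
    _ ≤ Multiset.card (X ^ p ^ m - X : k[X]).roots := Multiset.toFinset_card_le _
    _ ≤ (X ^ p ^ m - X : k[X]).natDegree := (X ^ p ^ m - X : k[X]).card_roots'
    _ = p ^ m := hdeg
  rw [hq] at hcard
  exact absurd ((Nat.pow_le_pow_iff_right hp1).mp hcard) (not_le.mpr hlt)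

/-- The norm formula for finite fields. -/
lemma stmt8norm_formula (b : k) :
    algebraMap (ZMod p) k (Algebra.norm (ZMod p) b) = b ^ ((Nat.card k - 1) / (p - 1)) := by
  have := Fintype.ofFinite k
  have : FiniteDimensional (ZMod p) k := Module.Finite.of_finite
  set n := Module.finrank (ZMod p) k with hn
  have hq : Fintype.card k = p ^ n := by
    have := Module.card_eq_pow_finrank (K := ZMod p) (V := k)
    rwa [ZMod.card] at this
  have hp1 : 1 < p := (Fact.out : p.Prime).one_lt
  have h1 : 1 ≤ p ^ n := Nat.one_le_pow _ _ (Fact.out : p.Prime).pos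
  set S : ℕ := ∑ i ∈ Finset.range n, p ^ i with hS
  have key : S * (p - 1) = p ^ n - 1 := by
    zify [hp1.le, h1]
    rw [hS]
    push_cast
    exact geom_sum_mul (p : ℤ) n
  have hexp : (Nat.card k - 1) / (p - 1) = S := by
    rw [Nat.card_eq_fintype_card, hq]
    exact Nat.div_eq_of_eq_mul_left (by omega) key.symm
  rw [hexp, Algebra.norm_eq_prod_automorphisms]
  have hcardG : Fintype.card (k ≃ₐ[ZMod p] k) = n := by
    rw [← Nat.card_eq_fintype_card]; exact IsGalois.card_aut_eq_finrank (ZMod p) k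
  have hbij : Function.Bijective (fun i : Fin n => stmt8frob p k ^ (i : ℕ)) := by
    rw [Fintype.bijective_iff_injective_and_card]
    refine ⟨fun i j hij => ?_, by simp [hcardG]⟩
    refine Fin.ext (pow_injOn_Iio_orderOf ?_ ?_ hij)
    · rw [Set.mem_Iio, stmt8orderOf]; exact i.2
    · rw [Set.mem_Iio, stmt8orderOf]; exact j.2
  rw [← Fintype.prod_bijective _ hbij (fun i => ((stmt8frob p k) ^ (i : ℕ)) b)
    (fun σ => σ b) (fun i => rfl)]
  have : ∀ i : Fin n, ((stmt8frob p k) ^ (i : ℕ)) b = b ^ p ^ (i : ℕ) :=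
    fun i => stmt8frob_pow_apply p k i b
  rw [Fintype.prod_congr _ _ this,
    Fin.prod_univ_eq_prod_range (fun i => b ^ p ^ i) n, ← Finset.prod_pow_eq_pow_sum]


/-- In a finite cyclic group of order `d * m`, `u ^ m = 1` iff `u` is a `d`-th power. -/
lemma stmt8cyclic {G : Type*} [CommGroup G] [Fintype G] [IsCyclic G] {d m : ℕ}
    (h : d * m = Fintype.card G) (hm : m ≠ 0) (u : G) :
    u ^ m = 1 ↔ ∃ v : G, v ^ d = u := by
  constructor
  · intro hu
    obtain ⟨g, hg⟩ := IsCyclic.exists_generator (α := G)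
    have horder : orderOf g = Fintype.card G := (orderOf_eq_card_of_forall_mem_zpowers hg).trans Nat.card_eq_fintype_card
    obtain ⟨j, hj⟩ : ∃ j : ℕ, g ^ j = u := by
      have := hg u
      rwa [← mem_powers_iff_mem_zpowers, Submonoid.mem_powers_iff] at this
    have hdvd : orderOf g ∣ j * m := by
      apply orderOf_dvd_of_pow_eq_one
      rw [pow_mul, hj, hu]
    rw [horder, ← h] at hdvd
    have hddvd : d ∣ j := by
      have h2 : m * d ∣ m * j := by
        rwa [Nat.mul_comm d m, Nat.mul_comm j m] at hdvd
      exact (Nat.mul_dvd_mul_iff_left (Nat.pos_of_ne_zero hm)).mp h2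
    obtain ⟨e, rfl⟩ := hddvd
    exact ⟨g ^ e, by rw [← pow_mul, Nat.mul_comm, hj]⟩
  · rintro ⟨v, rfl⟩
    rw [← pow_mul, h, pow_card_eq_one]

/-- `N(b) = 1` iff `b` is a `(p-1)`-st power of a nonzero element. -/
lemma stmt8norm_one_iff (b : k) (hb : b ≠ 0) :
    Algebra.norm (ZMod p) b = 1 ↔ ∃ c : k, c ≠ 0 ∧ c ^ (p - 1) = b := by
  have := Fintype.ofFinite k
  have hp1 : 1 < p := (Fact.out : p.Prime).one_lt
  set m : ℕ := (Nat.card k - 1) / (p - 1) with hm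
  -- (p-1) * m = card kˣ
  have hq : Fintype.card k = p ^ Module.finrank (ZMod p) k := by
    have := Module.card_eq_pow_finrank (K := ZMod p) (V := k)
    rwa [ZMod.card] at this
  have h1 : 1 ≤ p ^ Module.finrank (ZMod p) k := Nat.one_le_pow _ _ (by omega)
  have key : (∑ i ∈ Finset.range (Module.finrank (ZMod p) k), p ^ i) * (p - 1)
      = p ^ Module.finrank (ZMod p) k - 1 := by
    zify [hp1.le, h1]
    exact geom_sum_mul (p : ℤ) (Module.finrank (ZMod p) k)
  have hmval : m = ∑ i ∈ Finset.range (Module.finrank (ZMod p) k), p ^ i := by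
    rw [hm, Nat.card_eq_fintype_card, hq]
    exact Nat.div_eq_of_eq_mul_left (by omega) key.symm
  have hcardu : (p - 1) * m = Fintype.card kˣ := by
    rw [Fintype.card_units, hmval, hq, Nat.mul_comm, key]
  have hmne : m ≠ 0 := by
    intro h0
    rw [h0, Nat.mul_zero] at hcardu
    exact absurd hcardu.symm Fintype.card_pos.ne'
  set u : kˣ := Units.mk0 b hb with hu
  have hbu : (u : k) = b := rfl
  have step1 : Algebra.norm (ZMod p) b = 1 ↔ b ^ m = 1 := by
    rw [← (algebraMap (ZMod p) k).injective.eq_iff, map_one, stmt8norm_formula p k b, ← hm]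
  have step2 : b ^ m = 1 ↔ u ^ m = 1 := by
    rw [← hbu, ← Units.val_pow_eq_pow_val, Units.val_eq_one]
  have step3 := stmt8cyclic (G := kˣ) (d := p - 1) (m := m) hcardu hmne u
  rw [step1, step2, step3]
  constructor
  · rintro ⟨v, hv⟩
    refine ⟨(v : k), v.ne_zero, ?_⟩
    rw [← Units.val_pow_eq_pow_val, hv, hbu]
  · rintro ⟨c, hc, hcb⟩
    refine ⟨Units.mk0 c hc, Units.ext ?_⟩
    rw [Units.val_pow_eq_pow_val]
    exact hcb

end aux


/-- Lemma 8.13 (Hilbert 90 for `k/F_p`): for a finite field `k` of characteristic `p` and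
`b ∈ k^×`, the map `ψ_b(x) = b·x^p − x` is bijective if `N_{k/F_p}(b) ≠ 1`, and if
`N_{k/F_p}(b) = 1` then its kernel and cokernel both have exactly `p` elements. -/
theorem statement8 (p : ℕ) (hp : Fact p.Prime) (k : Type*) [Field k] [Finite k] [CharP k p]
    [Algebra (ZMod p) k] (b : k) (hb : b ≠ 0) :
    (Algebra.norm (ZMod p) b ≠ 1 → Function.Bijective (stmt8psi p k b)) ∧
    (Algebra.norm (ZMod p) b = 1 →
      Nat.card (stmt8psi p k b).ker = p ∧
      Nat.card (k ⧸ (stmt8psi p k b).range) = p) := by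
  have := Fintype.ofFinite k
  classical
  have hp1 : 1 < p := hp.out.one_lt
  have hp' : p - 1 + 1 = p := Nat.succ_pred_eq_of_pos (Nat.zero_lt_of_lt hp1)
  set ψ := stmt8psi p k b with hψdef
  have hψapp : ∀ x : k, ψ x = b * x ^ p - x := fun x => rfl
  have hker : ∀ x : k, x ∈ ψ.ker ↔ b * x ^ p = x := by
    intro x
    rw [AddMonoidHom.mem_ker, hψapp, sub_eq_zero]
  have hequiv : (∃ x : k, x ≠ 0 ∧ x ∈ ψ.ker) ↔ ∃ c : k, c ≠ 0 ∧ c ^ (p - 1) = b := by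
    constructor
    · rintro ⟨x, hx, hxk⟩
      rw [hker] at hxk
      refine ⟨x⁻¹, inv_ne_zero hx, ?_⟩
      have hmul : b * x ^ (p - 1) = 1 := by
        apply mul_right_cancel₀ hx
        rw [one_mul, mul_assoc, ← pow_succ, hp']
        exact hxk
      rw [inv_pow]
      exact inv_eq_of_mul_eq_one_left hmul
    · rintro ⟨c, hc, hcb⟩
      refine ⟨c⁻¹, inv_ne_zero hc, ?_⟩
      rw [hker, ← hcb]
      have hcp : c ^ p = c ^ (p - 1) * c := by rw [← pow_succ, hp']
      rw [inv_pow, hcp, mul_inv, ← mul_assoc, mul_inv_cancel₀ (pow_ne_zero _ hc), one_mul]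
  constructor
  · intro hN
    have hkertriv : ψ.ker = ⊥ := by
      rw [AddSubgroup.eq_bot_iff_forall]
      intro x hx
      by_contra hx0
      exact hN ((stmt8norm_one_iff p k b hb).mpr (hequiv.mp ⟨x, hx0, hx⟩))
    exact Finite.injective_iff_bijective.mp ((AddMonoidHom.ker_eq_bot_iff ψ).mp hkertriv)
  · intro hN
    obtain ⟨x0, hx0, hx0k⟩ := hequiv.mpr ((stmt8norm_one_iff p k b hb).mp hN)
    have hlow : 1 < Nat.card ψ.ker := by
      have : Nontrivial ψ.ker :=
        ⟨⟨⟨x0, hx0k⟩, ⟨0, ψ.ker.zero_mem⟩, by simp [Subtype.ext_iff, hx0]⟩⟩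
      exact Finite.one_lt_card_iff_nontrivial.mpr this
    have hup : Nat.card ψ.ker ≤ p := by
      set f : k[X] := C b * X ^ p - X with hf
      have h1 : (C b * X ^ p : k[X]).natDegree = p := by
        rw [natDegree_C_mul hb, natDegree_X_pow]
      have hfd : f.natDegree = p := by
        rw [hf, natDegree_sub_eq_left_of_natDegree_lt, h1]
        rw [h1, natDegree_X]; omega
      have hfne : f ≠ 0 := by
        intro h0
        rw [h0, natDegree_zero] at hfd; omega
      have hsub : (ψ.ker : Set k).toFinset ⊆ f.roots.toFinset := by
        intro x hx
        rw [Set.mem_toFinset] at hx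
        rw [Multiset.mem_toFinset, mem_roots hfne]
        have hxk : b * x ^ p = x := (hker x).mp hx
        simp [hf, IsRoot.def, hxk]
      calc Nat.card ψ.ker = (ψ.ker : Set k).toFinset.card := by
            rw [Nat.card_eq_fintype_card, Set.toFinset_card]
            exact Fintype.card_congr (Equiv.refl _)
      _ ≤ f.roots.toFinset.card := Finset.card_le_card hsub
      _ ≤ Multiset.card f.roots := Multiset.toFinset_card_le _
      _ ≤ f.natDegree := f.card_roots'
      _ = p := hfd
    have hdvd : Nat.card ψ.ker ∣ Nat.card k := AddSubgroup.card_addSubgroup_dvd_card ψ.ker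
    have hcardk : Nat.card k = p ^ Module.finrank (ZMod p) k := by
      rw [Nat.card_eq_fintype_card]
      have := Module.card_eq_pow_finrank (K := ZMod p) (V := k)
      rwa [ZMod.card] at this
    have hkerp : Nat.card ψ.ker = p := by
      rw [hcardk] at hdvd
      obtain ⟨j, _, hj⟩ := (Nat.dvd_prime_pow (Fact.out : p.Prime)).mp hdvd
      have hj1 : 1 ≤ j := by
        rcases Nat.eq_zero_or_pos j with h0 | h
        · subst h0
          rw [pow_zero] at hj
          omega
        · exact h
      have hj2 : j ≤ 1 := by
        rw [hj] at hup
        exact (Nat.pow_le_pow_iff_right hp1).mp (by simpa using hup)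
      have : j = 1 := le_antisymm hj2 hj1
      rw [hj, this, pow_one]
    refine ⟨hkerp, ?_⟩
    -- cokernel
    have e1 : Nat.card k = Nat.card (k ⧸ ψ.ker) * Nat.card ψ.ker :=
      AddSubgroup.card_eq_card_quotient_mul_card_addSubgroup ψ.ker
    have e2 : Nat.card k = Nat.card (k ⧸ ψ.range) * Nat.card ψ.range :=
      AddSubgroup.card_eq_card_quotient_mul_card_addSubgroup ψ.range
    have e3 : Nat.card (k ⧸ ψ.ker) = Nat.card ψ.range :=
      Nat.card_congr (QuotientAddGroup.quotientKerEquivRange ψ).toEquiv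
    have hrangepos : 0 < Nat.card ψ.range := Nat.card_pos
    have : Nat.card (k ⧸ ψ.range) * Nat.card ψ.range = Nat.card ψ.range * Nat.card ψ.ker := by
      rw [← e2, e1, e3]
    rw [hkerp, Nat.mul_comm (Nat.card (k ⧸ ψ.range)) (Nat.card ψ.range)] at this
    exact Nat.eq_of_mul_eq_mul_left hrangepos this
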